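/- Let f(x) = e^{−a x²} with a > 0. Then the ratio (∫_{−1/2}^{1/2} ∫_ℝ f(x) f(x+t) dx dt)/(‖f‖_{L^1} ‖f‖_{L^2}) equals (2π)^{1/4} erf(√(a/8)) / a^{1/4}, and for a = 7.839 this value exceeds 0.79. -/

import Mathlib

open MeasureTheory

lemma inner_int (a : ℝ) (ha : 0 < a) (t : ℝ) :
    ∫ x : ℝ, Real.exp (-a * x ^ 2) * Real.exp (-a * (x + t) ^ 2)
      = Real.exp (-(a/2) * t ^ 2) * Real.sqrt (Real.pi / (2*a)) := by
  have h : ∀ x : ℝ, Real.exp (-a * x ^ 2) * Real.exp (-a * (x + t) ^ 2)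
      = Real.exp (-(a/2) * t ^ 2) * Real.exp (-(2*a) * (x + t/2) ^ 2) := by
    intro x
    rw [← Real.exp_add, ← Real.exp_add]
    ring_nf
  simp_rw [h]
  rw [MeasureTheory.integral_const_mul,
    MeasureTheory.integral_add_right_eq_self (fun x => Real.exp (-(2*a) * x ^ 2)) (t/2),
    integral_gaussian]

lemma outer_int (a : ℝ) (ha : 0 < a) :
    ∫ t in (-(1/2) : ℝ)..(1/2), Real.exp (-(a/2) * t ^ 2)
      = (Real.sqrt (a/2))⁻¹ * (2 * ∫ s in (0:ℝ)..(Real.sqrt (a/8)), Real.exp (-s ^ 2)) := by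
  have hc : (0:ℝ) < Real.sqrt (a/2) := Real.sqrt_pos.2 (by linarith)
  set c := Real.sqrt (a/2) with hcdef
  have hc2 : c ^ 2 = a / 2 := Real.sq_sqrt (by linarith)
  have h : ∀ t : ℝ, Real.exp (-(a/2) * t ^ 2) = (fun s => Real.exp (-s^2)) (c * t) := by
    intro t; simp only [mul_pow, hc2]; ring_nf
  simp_rw [h]
  have hsub := intervalIntegral.integral_comp_mul_left (a:=-(1/2)) (b:=1/2) (fun s => Real.exp (-s^2)) hc.ne'
  beta_reduce at hsub
  rw [hsub]
  have h8 : c * (1/2) = Real.sqrt (a/8) := by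
    refine (pow_left_inj₀ (by positivity) (Real.sqrt_nonneg _) two_ne_zero).1 ?_
    rw [mul_pow, Real.sq_sqrt (by linarith : (0:ℝ) ≤ a/2), Real.sq_sqrt (by linarith : (0:ℝ) ≤ a/8)]
    ring
  have hsplit : ∫ s in (c * -(1/2))..(c * (1/2)), Real.exp (-s^2)
      = 2 * ∫ s in (0:ℝ)..(c * (1/2)), Real.exp (-s ^ 2) := by
    have hint : ∀ u v : ℝ, IntervalIntegrable (fun s => Real.exp (-s^2)) volume u v := by
      intro u v; exact (Continuous.intervalIntegrable (by continuity) u v)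
    rw [← intervalIntegral.integral_add_adjacent_intervals (b := (0:ℝ)) (hint _ _) (hint _ _)]
    have : ∫ s in (c * -(1/2))..(0:ℝ), Real.exp (-s^2)
        = ∫ s in (0:ℝ)..(c * (1/2)), Real.exp (-s^2) := by
      have hneg := intervalIntegral.integral_comp_neg (a:=(0:ℝ)) (b:=c*(1/2)) (fun s => Real.exp (-s^2))
      simp only [neg_sq, neg_zero] at hneg
      rw [show c * -(1/2) = -(c * (1/2)) by ring]
      exact hneg.symm
    rw [this]; ring
  rw [hsplit, h8, smul_eq_mul]


noncomputable def erf (z : ℝ) : ℝ :=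
  (2 / Real.sqrt Real.pi) * ∫ s in (0:ℝ)..z, Real.exp (-s ^ 2)

lemma part1 (a : ℝ) (ha : 0 < a) :
    (∫ t in (-(1/2) : ℝ)..(1/2), ∫ x : ℝ,
        Real.exp (-a * x ^ 2) * Real.exp (-a * (x + t) ^ 2)) /
        ((∫ x : ℝ, |Real.exp (-a * x ^ 2)|) *
          Real.sqrt (∫ x : ℝ, Real.exp (-a * x ^ 2) ^ 2)) =
      (2 * Real.pi) ^ ((1 : ℝ) / 4) * erf (Real.sqrt (a / 8)) / a ^ ((1 : ℝ) / 4) := by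
  have hpi := Real.pi_pos
  have hc : (0:ℝ) < Real.sqrt (a/2) := Real.sqrt_pos.2 (by linarith)
  set c := Real.sqrt (a/2) with hcdef
  set E := erf (Real.sqrt (a/8)) with hEdef
  set I := ∫ s in (0:ℝ)..(Real.sqrt (a/8)), Real.exp (-s ^ 2) with hIdef
  have hI : I = Real.sqrt Real.pi / 2 * E := by
    rw [hEdef, erf, ← hIdef]
    have : Real.sqrt Real.pi ≠ 0 := by positivity
    field_simp
  -- numerator
  have hN : (∫ t in (-(1/2) : ℝ)..(1/2), ∫ x : ℝ,
        Real.exp (-a * x ^ 2) * Real.exp (-a * (x + t) ^ 2))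
      = (c⁻¹ * (2 * I)) * Real.sqrt (Real.pi / (2*a)) := by
    have h1 : ∀ t : ℝ, (∫ x : ℝ, Real.exp (-a * x ^ 2) * Real.exp (-a * (x + t) ^ 2))
        = Real.exp (-(a/2) * t ^ 2) * Real.sqrt (Real.pi / (2*a)) := inner_int a ha
    simp_rw [h1]
    rw [intervalIntegral.integral_mul_const, outer_int a ha]
  -- denominator pieces
  have hD1 : (∫ x : ℝ, |Real.exp (-a * x ^ 2)|) = Real.sqrt (Real.pi / a) := by
    simp_rw [abs_of_pos (Real.exp_pos _)]
    exact integral_gaussian a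
  have hD2 : (∫ x : ℝ, Real.exp (-a * x ^ 2) ^ 2) = Real.sqrt (Real.pi / (2*a)) := by
    have : ∀ x : ℝ, Real.exp (-a * x ^ 2) ^ 2 = Real.exp (-(2*a) * x ^ 2) := by
      intro x; rw [pow_two, ← Real.exp_add]; ring_nf
    simp_rw [this]
    exact integral_gaussian (2*a)
  rw [hN, hD1, hD2, hI]
  -- key constant identity
  have hK : c⁻¹ * Real.sqrt Real.pi * Real.sqrt (Real.pi / (2*a))
        / (Real.sqrt (Real.pi / a) * Real.sqrt (Real.sqrt (Real.pi / (2*a))))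
      = (2 * Real.pi) ^ ((1 : ℝ) / 4) / a ^ ((1 : ℝ) / 4) := by
    have h4 : ((1:ℝ)/4) = ((4:ℕ):ℝ)⁻¹ := by norm_num
    refine (pow_left_inj₀ (by positivity) (by positivity) (n := 4) (by norm_num)).1 ?_
    have e1 : (Real.sqrt (Real.pi / (2*a))) ^ 4 = (Real.pi/(2*a))^2 := by
      rw [show (4:ℕ) = 2*2 by norm_num, pow_mul, Real.sq_sqrt (by positivity)]
    have e2 : (Real.sqrt (Real.sqrt (Real.pi / (2*a)))) ^ 4 = Real.pi/(2*a) := by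
      rw [show (4:ℕ) = 2*2 by norm_num, pow_mul, Real.sq_sqrt (by positivity),
        Real.sq_sqrt (by positivity)]
    have e3 : (Real.sqrt (Real.pi / a)) ^ 4 = (Real.pi/a)^2 := by
      rw [show (4:ℕ) = 2*2 by norm_num, pow_mul, Real.sq_sqrt (by positivity)]
    have e4 : (Real.sqrt Real.pi) ^ 4 = Real.pi^2 := by
      rw [show (4:ℕ) = 2*2 by norm_num, pow_mul, Real.sq_sqrt (by positivity)]
    have e5 : c ^ 4 = (a/2)^2 := by
      rw [hcdef, show (4:ℕ) = 2*2 by norm_num, pow_mul, Real.sq_sqrt (by positivity)]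
    have e6 : ((2 * Real.pi) ^ ((1 : ℝ) / 4)) ^ 4 = 2 * Real.pi := by
      rw [h4]; exact Real.rpow_inv_natCast_pow (by positivity) (by norm_num)
    have e7 : (a ^ ((1 : ℝ) / 4)) ^ 4 = a := by
      rw [h4]; exact Real.rpow_inv_natCast_pow (by positivity) (by norm_num)
    rw [div_pow, div_pow, mul_pow, mul_pow, mul_pow, inv_pow, e1, e2, e3, e4, e5, e6, e7]
    rw [div_eq_div_iff (by positivity) (by positivity)]
    field_simp
  calc (c⁻¹ * (2 * (Real.sqrt Real.pi / 2 * E))) * Real.sqrt (Real.pi / (2*a))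
        / (Real.sqrt (Real.pi / a) * Real.sqrt (Real.sqrt (Real.pi / (2*a))))
      = (c⁻¹ * Real.sqrt Real.pi * Real.sqrt (Real.pi / (2*a))
        / (Real.sqrt (Real.pi / a) * Real.sqrt (Real.sqrt (Real.pi / (2*a))))) * E := by ring
    _ = ((2 * Real.pi) ^ ((1 : ℝ) / 4) / a ^ ((1 : ℝ) / 4)) * E := by rw [hK]
    _ = (2 * Real.pi) ^ ((1 : ℝ) / 4) * E / a ^ ((1 : ℝ) / 4) := by ring

lemma part2 : (0.79 : ℝ) <
    (2 * Real.pi) ^ ((1 : ℝ) / 4) * erf (Real.sqrt ((7.839:ℝ) / 8)) / (7.839:ℝ) ^ ((1 : ℝ) / 4) := by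
  have hpi := Real.pi_pos
  set z := Real.sqrt ((7.839:ℝ) / 8) with hzdef
  have hw : z ^ 2 = 7.839 / 8 := Real.sq_sqrt (by norm_num)
  have hz0 : 0 ≤ z := Real.sqrt_nonneg _
  have hz1 : z ≤ 1 := by nlinarith [hw]
  -- pointwise bound
  have hpt : ∀ s ∈ Set.Icc (0:ℝ) z,
      1 - s^2 + s^4/2 - s^6/6 + s^8/24 - s^10/120 - 7*s^12/4320 ≤ Real.exp (-s^2) := by
    intro s hs
    obtain ⟨hs0, hs1⟩ := hs
    have hu1 : s^2 ≤ 1 := by nlinarith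
    have habs : |(-(s^2))| = s^2 := by rw [abs_neg, abs_of_nonneg (sq_nonneg s)]
    have hb := Real.exp_bound (x := -(s^2)) (by rw [habs]; exact hu1) (n := 6) (by norm_num)
    have hsum : ∑ m ∈ Finset.range 6, (-(s^2)) ^ m / (m.factorial : ℝ)
        = 1 - s^2 + s^4/2 - s^6/6 + s^8/24 - s^10/120 := by
      simp [Finset.sum_range_succ, Nat.factorial]
      ring
    rw [habs, hsum] at hb
    have h1 := (abs_le.1 hb).1
    norm_num [Nat.factorial] at h1
    have h2 : ((s^2)^6 : ℝ) = s^12 := by ring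
    nlinarith [h1]
  -- antiderivative
  have hF : ∀ s : ℝ, HasDerivAt (fun x : ℝ => x - x^3/3 + x^5/10 - x^7/42 + x^9/216 - x^11/1320 - 7*x^13/56160)
      (1 - s^2 + s^4/2 - s^6/6 + s^8/24 - s^10/120 - 7*s^12/4320) s := by
    intro s
    have h := (((((((hasDerivAt_id s).sub ((hasDerivAt_pow 3 s).div_const 3)).add
      ((hasDerivAt_pow 5 s).div_const 10)).sub ((hasDerivAt_pow 7 s).div_const 42)).add
      ((hasDerivAt_pow 9 s).div_const 216)).sub ((hasDerivAt_pow 11 s).div_const 1320)).sub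
      (((hasDerivAt_pow 13 s).div_const 56160).const_mul 7))
    refine (h.congr_deriv ?_).congr_of_eventuallyEq (Filter.Eventually.of_forall fun x => ?_)
    · push_cast; norm_num <;> ring
    · simp only [id, Pi.sub_apply, Pi.add_apply]; ring
  have hpoly : ∫ s in (0:ℝ)..z, (1 - s^2 + s^4/2 - s^6/6 + s^8/24 - s^10/120 - 7*s^12/4320)
      = z - z^3/3 + z^5/10 - z^7/42 + z^9/216 - z^11/1320 - 7*z^13/56160 := by
    rw [intervalIntegral.integral_eq_sub_of_hasDerivAt (fun s _ => hF s)
      ((Continuous.intervalIntegrable (by fun_prop) 0 z))]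
    norm_num
  have hmono : ∫ s in (0:ℝ)..z, (1 - s^2 + s^4/2 - s^6/6 + s^8/24 - s^10/120 - 7*s^12/4320)
      ≤ ∫ s in (0:ℝ)..z, Real.exp (-s^2) :=
    intervalIntegral.integral_mono_on hz0
      (Continuous.intervalIntegrable (by fun_prop) 0 z)
      (Continuous.intervalIntegrable (by fun_prop) 0 z) hpt
  rw [hpoly] at hmono
  set I := ∫ s in (0:ℝ)..z, Real.exp (-s^2) with hIdef
  have h3 : z^3 = z^2 * z := by ring
  have h5 : z^5 = (z^2)^2 * z := by ring
  have h7 : z^7 = (z^2)^3 * z := by ring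
  have h9 : z^9 = (z^2)^4 * z := by ring
  have h11 : z^11 = (z^2)^5 * z := by ring
  have h13 : z^13 = (z^2)^6 * z := by ring
  rw [h3, h5, h7, h9, h11, h13, hw] at hmono
  have hI2 : (0.748:ℝ) * z ≤ I := by
    have hq : (0.748:ℝ) * z ≤ (1 - (7.839/8)/3 + ((7.839:ℝ)/8)^2/10 - ((7.839:ℝ)/8)^3/42
        + ((7.839:ℝ)/8)^4/216 - ((7.839:ℝ)/8)^5/1320 - 7*((7.839:ℝ)/8)^6/56160) * z := by
      have : (0.748:ℝ) ≤ (1 - (7.839/8)/3 + ((7.839:ℝ)/8)^2/10 - ((7.839:ℝ)/8)^3/42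
        + ((7.839:ℝ)/8)^4/216 - ((7.839:ℝ)/8)^5/1320 - 7*((7.839:ℝ)/8)^6/56160) := by norm_num
      nlinarith [hz0]
    refine hq.trans (le_trans (le_of_eq (by ring)) hmono)
  have hE : 2 / Real.sqrt Real.pi * ((0.748:ℝ) * z) ≤ erf z := by
    rw [erf, ← hIdef]
    have hp : (0:ℝ) < 2 / Real.sqrt Real.pi := by positivity
    exact mul_le_mul_of_nonneg_left hI2 hp.le
  have hsp4 : (Real.sqrt Real.pi)^4 = Real.pi^2 := by
    rw [show (4:ℕ) = 2*2 by norm_num, pow_mul, Real.sq_sqrt hpi.le]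
  have h4 : ((1:ℝ)/4) = ((4:ℕ):ℝ)⁻¹ := by norm_num
  have e6 : ((2 * Real.pi) ^ ((1 : ℝ) / 4)) ^ 4 = 2 * Real.pi := by
    rw [h4]; exact Real.rpow_inv_natCast_pow (by positivity) (by norm_num)
  have e7 : (((7.839:ℝ)) ^ ((1 : ℝ) / 4)) ^ 4 = 7.839 := by
    rw [h4]; exact Real.rpow_inv_natCast_pow (by norm_num) (by norm_num)
  set Y := (2 * Real.pi) ^ ((1 : ℝ) / 4) * (2 / Real.sqrt Real.pi * ((0.748:ℝ) * z)) / (7.839:ℝ) ^ ((1 : ℝ) / 4) with hYdef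
  have hY0 : 0 ≤ Y := by positivity
  have hY4 : Y^4 = 2 * Real.pi * (2^4 / Real.pi^2 * ((0.748:ℝ)^4 * ((7.839:ℝ)/8)^2)) / 7.839 := by
    rw [hYdef, div_pow, mul_pow, mul_pow, div_pow, mul_pow, e6, e7, hsp4,
      show z^4 = (z^2)^2 by ring, hw]
  have hlt : (0.79:ℝ) < Y := by
    refine lt_of_pow_lt_pow_left₀ 4 hY0 ?_
    rw [hY4]
    rw [lt_div_iff₀ (by norm_num)]
    have hr : 2 * Real.pi * (2^4 / Real.pi^2 * ((0.748:ℝ)^4 * ((7.839:ℝ)/8)^2))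
        = (2 * 2^4 * ((0.748:ℝ)^4 * ((7.839:ℝ)/8)^2)) / Real.pi := by
      field_simp
    rw [hr, lt_div_iff₀ hpi]
    nlinarith [Real.pi_lt_d6]
  refine hlt.trans_le ?_
  rw [hYdef]
  gcongr

theorem gaussian_ratio (a : ℝ) (ha : 0 < a) :
    (∫ t in (-(1/2) : ℝ)..(1/2), ∫ x : ℝ,
        Real.exp (-a * x ^ 2) * Real.exp (-a * (x + t) ^ 2)) /
        ((∫ x : ℝ, |Real.exp (-a * x ^ 2)|) *
          Real.sqrt (∫ x : ℝ, Real.exp (-a * x ^ 2) ^ 2)) =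
      (2 * Real.pi) ^ ((1 : ℝ) / 4) * erf (Real.sqrt (a / 8)) / a ^ ((1 : ℝ) / 4) ∧
    (a = 7.839 →
      (0.79 : ℝ) <
        (2 * Real.pi) ^ ((1 : ℝ) / 4) * erf (Real.sqrt (a / 8)) / a ^ ((1 : ℝ) / 4)) := by
  refine ⟨part1 a ha, ?_⟩
  rintro rfl
  exact part2
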